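/- Let H be a vertex-minimal finite simple graph with θ(H) ≤ 8 and χ'_s(H) > 20, and suppose H has only vertices of degrees 3, 4, 5. If a 3-vertex x of H is adjacent to another 3-vertex, then the other two neighbors of x are both 5-vertices. -/

import Mathlib

open SimpleGraph

variable {V : Type*}

/-- Two edges are at distance at most 2 (they "see" each other): distinct and
some endpoint of one equals or is adjacent to some endpoint of the other. -/
def EdgeSees (G : SimpleGraph V) (e e' : Sym2 V) : Prop :=
  e ≠ e' ∧ ∃ a ∈ e, ∃ b ∈ e', a = b ∨ G.Adj a b

/-- `G` admits a strong `N`-edge-coloring. -/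
def HasStrongColoring (G : SimpleGraph V) (N : ℕ) : Prop :=
  ∃ f : G.edgeSet → Fin N, ∀ e e' : G.edgeSet, EdgeSees G e.val e'.val → f e ≠ f e'

/-- `G − v`: delete the vertex `v` (remove all edges incident to it). -/
def DelV (G : SimpleGraph V) (v : V) : SimpleGraph V where
  Adj a b := G.Adj a b ∧ a ≠ v ∧ b ≠ v
  symm := ⟨fun _ _ h => ⟨h.1.symm, h.2.2, h.2.1⟩⟩
  loopless := ⟨fun a h => G.loopless.irrefl a h.1⟩

lemma delv_adj {G : SimpleGraph V} {v a b : V} :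
    (DelV G v).Adj a b ↔ G.Adj a b ∧ a ≠ v ∧ b ≠ v := Iff.rfl

lemma delv_not_mem {G : SimpleGraph V} {v : V} {e : Sym2 V} (he : e ∈ (DelV G v).edgeSet) :
    v ∉ e := by
  induction e with
  | _ a b =>
    rw [SimpleGraph.mem_edgeSet] at he
    obtain ⟨-, ha, hb⟩ := he
    rw [Sym2.mem_iff]
    rintro (rfl | rfl) <;> simp_all

lemma delv_degree_le [Fintype V] [DecidableEq V] {H : SimpleGraph V} [DecidableRel H.Adj]
    {x : V} [DecidableRel (DelV H x).Adj] (v : V) :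
    (DelV H x).degree v ≤ H.degree v := by
  apply Finset.card_le_card
  intro w hw
  rw [mem_neighborFinset] at hw ⊢
  exact hw.1

lemma delv_degree_lt [Fintype V] [DecidableEq V] {H : SimpleGraph V} [DecidableRel H.Adj]
    {x : V} [DecidableRel (DelV H x).Adj] {v : V} (hv : H.Adj x v) :
    (DelV H x).degree v ≤ H.degree v - 1 := by
  have hsub : (DelV H x).neighborFinset v ⊆ H.neighborFinset v \ {x} := by
    intro w hw
    rw [mem_neighborFinset, delv_adj] at hw
    rw [Finset.mem_sdiff, mem_neighborFinset, Finset.mem_singleton]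
    exact ⟨hw.1, hw.2.2⟩
  calc (DelV H x).degree v ≤ (H.neighborFinset v \ {x}).card := Finset.card_le_card hsub
    _ = H.degree v - 1 := by
        rw [Finset.card_sdiff_of_subset (Finset.singleton_subset_iff.2 ((mem_neighborFinset _ _ _).2 hv.symm)),
          Finset.card_singleton]
        rfl

lemma seen_card_le [Fintype V] [DecidableEq V] (H : SimpleGraph V) [DecidableRel H.Adj]
    (hore : ∀ a b, H.Adj a b → H.degree a + H.degree b ≤ 8)
    (x u p q : V) (hnx : H.neighborFinset x = {u, p, q})
    (S : Finset (Sym2 V))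
    (hS : ∀ e ∈ S, e ∈ (DelV H x).edgeSet ∧ EdgeSees H s(x, u) e) :
    S.card ≤ (H.degree u - 1) + (H.degree u - 1) * (7 - H.degree u)
      + (H.degree p - 1) + (H.degree q - 1) := by
  classical
  set G' := DelV H x with hG'
  have hxu : H.Adj x u := by rw [← mem_neighborFinset, hnx]; simp
  have hxp : H.Adj x p := by rw [← mem_neighborFinset, hnx]; simp
  have hxq : H.Adj x q := by rw [← mem_neighborFinset, hnx]; simp
  have hux : u ≠ x := hxu.ne'
  -- the big covering union
  set T : Finset (Sym2 V) :=
    G'.incidenceFinset u ∪ G'.incidenceFinset p ∪ G'.incidenceFinset q ∪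
      (G'.neighborFinset u).biUnion (fun v => G'.incidenceFinset v \ G'.incidenceFinset u)
    with hT
  have hinc : ∀ (e : Sym2 V), e ∈ (DelV H x).edgeSet → ∀ v ∈ e, e ∈ G'.incidenceFinset v := by
    intro e he v hv
    rw [mem_incidenceFinset]
    exact ⟨he, hv⟩
  have hsub : S ⊆ T := by
    intro e he
    obtain ⟨heG, hne, a, ha, b, hb, hab⟩ := hS e he
    have hbx : b ≠ x := fun h => delv_not_mem heG (h ▸ hb)
    rw [Sym2.mem_iff] at ha
    rw [hT]
    simp only [Finset.mem_union]
    rcases ha with rfl | rfl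
    · rcases hab with rfl | hadj
      · exact absurd rfl hbx
      · have : b ∈ H.neighborFinset a := by rw [mem_neighborFinset]; exact hadj
        rw [hnx] at this
        simp only [Finset.mem_insert, Finset.mem_singleton] at this
        rcases this with rfl | rfl | rfl
        · exact Or.inl (Or.inl (Or.inl (hinc e heG _ hb)))
        · exact Or.inl (Or.inl (Or.inr (hinc e heG _ hb)))
        · exact Or.inl (Or.inr (hinc e heG _ hb))
    · rcases hab with rfl | hadj
      · exact Or.inl (Or.inl (Or.inl (hinc e heG _ hb)))
      · by_cases hu : e ∈ G'.incidenceFinset a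
        · exact Or.inl (Or.inl (Or.inl hu))
        · refine Or.inr (Finset.mem_biUnion.2 ⟨b, ?_, ?_⟩)
          · rw [mem_neighborFinset]; exact ⟨hadj, hux, hbx⟩
          · exact Finset.mem_sdiff.2 ⟨hinc e heG _ hb, hu⟩
  have hbd : ∀ v ∈ G'.neighborFinset u,
      (G'.incidenceFinset v \ G'.incidenceFinset u).card ≤ 7 - H.degree u := by
    intro v hv
    rw [mem_neighborFinset] at hv
    obtain ⟨hadj, -, hvx⟩ := hv
    have hedge : s(u, v) ∈ G'.incidenceFinset u ∧ s(u, v) ∈ G'.incidenceFinset v := by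
      constructor <;> · rw [mem_incidenceFinset]
                        exact ⟨(delv_adj.2 ⟨hadj, hux, hvx⟩ : G'.Adj u v), by simp⟩
    have hsub2 : G'.incidenceFinset v \ G'.incidenceFinset u ⊆
        G'.incidenceFinset v \ {s(u, v)} := by
      intro e he
      rw [Finset.mem_sdiff] at he ⊢
      refine ⟨he.1, fun h => he.2 ?_⟩
      rw [Finset.mem_singleton] at h
      exact h ▸ hedge.1
    have h1 : (G'.incidenceFinset v \ {s(u, v)}).card = G'.degree v - 1 := by
      rw [Finset.card_sdiff_of_subset (Finset.singleton_subset_iff.2 hedge.2)]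
      simp
    have h2 : G'.degree v ≤ H.degree v := delv_degree_le v
    have h3 : H.degree u + H.degree v ≤ 8 := hore u v hadj
    have := Finset.card_le_card hsub2
    omega
  have hcard : S.card ≤ T.card := Finset.card_le_card hsub
  have hTcard : T.card ≤ G'.degree u + G'.degree p + G'.degree q
      + G'.degree u * (7 - H.degree u) := by
    rw [hT]
    refine le_trans (Finset.card_union_le _ _) ?_
    have h1 := Finset.card_union_le (G'.incidenceFinset u ∪ G'.incidenceFinset p)
      (G'.incidenceFinset q)
    have h2 := Finset.card_union_le (G'.incidenceFinset u) (G'.incidenceFinset p)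
    have h3 : ((G'.neighborFinset u).biUnion
        (fun v => G'.incidenceFinset v \ G'.incidenceFinset u)).card
        ≤ G'.degree u * (7 - H.degree u) := by
      refine le_trans (Finset.card_biUnion_le) ?_
      rw [show G'.degree u = (G'.neighborFinset u).card from rfl]
      calc ∑ v ∈ G'.neighborFinset u, (G'.incidenceFinset v \ G'.incidenceFinset u).card
          ≤ ∑ _v ∈ G'.neighborFinset u, (7 - H.degree u) := Finset.sum_le_sum hbd
        _ = (G'.neighborFinset u).card * (7 - H.degree u) := by
            rw [Finset.sum_const, smul_eq_mul]
    have h4 : (G'.incidenceFinset u).card = G'.degree u := card_incidenceFinset_eq_degree _ _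
    have h5 : (G'.incidenceFinset p).card = G'.degree p := card_incidenceFinset_eq_degree _ _
    have h6 : (G'.incidenceFinset q).card = G'.degree q := card_incidenceFinset_eq_degree _ _
    omega
  have du : G'.degree u ≤ H.degree u - 1 := delv_degree_lt hxu
  have dp : G'.degree p ≤ H.degree p - 1 := delv_degree_lt hxp
  have dq : G'.degree q ≤ H.degree q - 1 := delv_degree_lt hxq
  have := Nat.mul_le_mul_right (7 - H.degree u) du
  omega

lemma delv_edge_mem {G : SimpleGraph V} {v : V} {e : Sym2 V} (he : e ∈ G.edgeSet)
    (hv : v ∉ e) : e ∈ (DelV G v).edgeSet := by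
  induction e with
  | _ a b =>
    rw [SimpleGraph.mem_edgeSet] at he ⊢
    rw [Sym2.mem_iff] at hv
    push_neg at hv
    exact ⟨he, Ne.symm hv.1, Ne.symm hv.2⟩

lemma edgeSees_symm {G : SimpleGraph V} {e e' : Sym2 V} (h : EdgeSees G e e') :
    EdgeSees G e' e := by
  obtain ⟨hne, a, ha, b, hb, hab⟩ := h
  exact ⟨hne.symm, b, hb, a, ha, by
    rcases hab with h | h
    · exact Or.inl h.symm
    · exact Or.inr h.symm⟩

lemma edge_eq_of_mem {G : SimpleGraph V} {x : V} {e : Sym2 V} (he : e ∈ G.edgeSet)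
    (hx : x ∈ e) : ∃ c, G.Adj x c ∧ e = s(x, c) := by
  induction e with
  | _ a b =>
    rw [SimpleGraph.mem_edgeSet] at he
    rw [Sym2.mem_iff] at hx
    rcases hx with rfl | rfl
    · exact ⟨b, he, rfl⟩
    · exact ⟨a, he.symm, Sym2.eq_swap⟩

lemma exists_fresh {F : Finset (Fin 20)} (h : F.card < 20) : ∃ c, c ∉ F := by
  by_contra hc
  push_neg at hc
  have : (Finset.univ : Finset (Fin 20)) ⊆ F := fun c _ => hc c
  have := Finset.card_le_card this
  simp at this
  omega

def SeenF [Fintype V] [DecidableEq V] (H : SimpleGraph V) (x u : V)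
    [DecidableRel (DelV H x).Adj] [DecidablePred (EdgeSees H s(x, u))] : Finset (Sym2 V) :=
  (DelV H x).edgeFinset.filter (fun e => EdgeSees H s(x, u) e)

lemma mem_SeenF [Fintype V] [DecidableEq V] {H : SimpleGraph V} {x u : V}
    [DecidableRel (DelV H x).Adj] [DecidablePred (EdgeSees H s(x, u))] {e : Sym2 V} :
    e ∈ SeenF H x u ↔ e ∈ (DelV H x).edgeSet ∧ EdgeSees H s(x, u) e := by
  unfold SeenF
  rw [Finset.mem_filter, mem_edgeFinset]


set_option maxHeartbeats 1000000 in
/-- θ ≤ 8, χ'ₛ > 20, all degrees in {3,4,5}: a 3-vertex adjacent to a 3-vertex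
has its other two neighbors of degree 5. -/
theorem stmt8 [Fintype V] (H : SimpleGraph V) [DecidableRel H.Adj]
    (hore : ∀ u w, H.Adj u w → H.degree u + H.degree w ≤ 8)
    (hnc : ¬ HasStrongColoring H 20)
    (hmin : ∀ v, HasStrongColoring (DelV H v) 20)
    (hdeg : ∀ v, H.degree v = 3 ∨ H.degree v = 4 ∨ H.degree v = 5) :
    ∀ x y, H.degree x = 3 → H.Adj x y → H.degree y = 3 →
      ∀ z, H.Adj x z → z ≠ y → H.degree z = 5 := by
  classical
  intro x y hdx hxy hdy z hxz hzy
  by_contra hz5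
  apply hnc
  have hdz : H.degree z = 3 ∨ H.degree z = 4 := by rcases hdeg z with h | h | h <;> tauto
  -- find the third neighbor w
  have hyz_sub : ({y, z} : Finset V) ⊆ H.neighborFinset x := by
    intro a ha
    simp only [Finset.mem_insert, Finset.mem_singleton] at ha
    rcases ha with rfl | rfl
    · rwa [mem_neighborFinset]
    · rwa [mem_neighborFinset]
  have hcard2 : ({y, z} : Finset V).card = 2 := by
    rw [Finset.card_insert_of_notMem (by simpa using Ne.symm hzy), Finset.card_singleton]
  have hW : (H.neighborFinset x \ {y, z}).card = 1 := by
    rw [Finset.card_sdiff_of_subset hyz_sub, hcard2,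
      show (H.neighborFinset x).card = H.degree x from rfl, hdx]
  obtain ⟨w, hw⟩ := Finset.card_eq_one.1 hW
  have hwmem : w ∈ H.neighborFinset x \ ({y, z} : Finset V) := by rw [hw]; simp
  have hxw : H.Adj x w := by
    have := (Finset.mem_sdiff.1 hwmem).1
    rwa [mem_neighborFinset] at this
  have hwyz : w ≠ y ∧ w ≠ z := by
    have := (Finset.mem_sdiff.1 hwmem).2
    simpa using this
  obtain ⟨hwy, hwz⟩ := hwyz
  have hnx : H.neighborFinset x = {y, z, w} := by
    have h := Finset.union_sdiff_of_subset hyz_sub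
    rw [hw] at h
    rw [← h]
    ext a
    simp [or_assoc]
  have hnxz : H.neighborFinset x = {z, y, w} := by
    rw [hnx, Finset.insert_comm y z]
  have hnxw : H.neighborFinset x = {w, y, z} := by
    rw [hnx, Finset.pair_comm z w, Finset.insert_comm y w]
  -- coloring of H - x
  obtain ⟨f, hf⟩ := hmin x
  set fc : Sym2 V → Fin 20 :=
    (fun e => if h : e ∈ (DelV H x).edgeSet then f ⟨e, h⟩ else 0) with hfc
  have hFcard : ∀ u p q, H.neighborFinset x = {u, p, q} →
      ((SeenF H x u).image fc).card ≤ (H.degree u - 1) + (H.degree u - 1) * (7 - H.degree u)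
        + (H.degree p - 1) + (H.degree q - 1) := by
    intro u p q h
    exact le_trans Finset.card_image_le
      (seen_card_le H hore x u p q h _ (fun e he => mem_SeenF.1 he))
  have hdw := hdeg w
  have bz : ((SeenF H x z).image fc).card ≤ 18 := by
    have := hFcard z y w hnxz
    rcases hdz with h | h <;> rcases hdw with h' | h' | h' <;>
      rw [h, h', hdy] at this <;> omega
  have bw : ((SeenF H x w).image fc).card ≤ 17 := by
    have := hFcard w y z hnxw
    rcases hdz with h | h <;> rcases hdw with h' | h' | h' <;>
      rw [h, h', hdy] at this <;> omega
  have by' : ((SeenF H x y).image fc).card ≤ 17 := by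
    have := hFcard y z w hnx
    rcases hdz with h | h <;> rcases hdw with h' | h' | h' <;>
      rw [h, h', hdy] at this <;> omega
  -- choose fresh colors
  obtain ⟨cz, hcz⟩ := exists_fresh (F := (SeenF H x z).image fc) (by omega)
  obtain ⟨cw, hcw'⟩ := exists_fresh (F := (SeenF H x w).image fc ∪ {cz}) (by
    have := Finset.card_union_le ((SeenF H x w).image fc) {cz}
    simp only [Finset.card_singleton] at this
    omega)
  have hcw : cw ∉ (SeenF H x w).image fc := fun h => hcw' (Finset.mem_union_left _ h)
  have hcwz : cw ≠ cz := fun h => hcw' (Finset.mem_union_right _ (by simp [h]))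
  obtain ⟨cy, hcy'⟩ := exists_fresh (F := (SeenF H x y).image fc ∪ {cz, cw}) (by
    have h1 := Finset.card_union_le ((SeenF H x y).image fc) {cz, cw}
    have h2 : ({cz, cw} : Finset (Fin 20)).card ≤ 2 :=
      le_trans (Finset.card_insert_le _ _) (by simp)
    omega)
  have hcy : cy ∉ (SeenF H x y).image fc := fun h => hcy' (Finset.mem_union_left _ h)
  have hcyz : cy ≠ cz := fun h => hcy' (Finset.mem_union_right _ (by simp [h]))
  have hcyw : cy ≠ cw := fun h => hcy' (Finset.mem_union_right _ (by simp [h]))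
  -- the three new edges are pairwise distinct
  have pair_ne : ∀ a b : V, a ≠ b → a ≠ x → s(x, a) ≠ s(x, b) := by
    intro a b hab hax h
    rw [Sym2.eq_iff] at h
    rcases h with ⟨-, h⟩ | ⟨h1, h2⟩
    · exact hab h
    · exact hax h2
  have ne_zy := pair_ne z y hzy hxz.ne'
  have ne_wy := pair_ne w y hwy hxw.ne'
  have ne_wz := pair_ne w z hwz hxw.ne'
  -- the extended coloring
  set nc : Sym2 V → Fin 20 :=
    (fun e => if e = s(x, y) then cy else if e = s(x, z) then cz
      else if e = s(x, w) then cw else fc e) with hncdef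
  have ncy : nc s(x, y) = cy := by simp [hncdef]
  have ncz : nc s(x, z) = cz := by simp [hncdef, ne_zy]
  have ncw : nc s(x, w) = cw := by simp [hncdef, ne_wy, ne_wz]
  have hval_old : ∀ e : Sym2 V, x ∉ e → nc e = fc e := by
    intro e hx'
    have h1 : e ≠ s(x, y) := fun h => hx' (by rw [h]; exact Sym2.mem_mk_left x y)
    have h2 : e ≠ s(x, z) := fun h => hx' (by rw [h]; exact Sym2.mem_mk_left x z)
    have h3 : e ≠ s(x, w) := fun h => hx' (by rw [h]; exact Sym2.mem_mk_left x w)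
    simp [hncdef, h1, h2, h3]
  -- key: a new edge vs an old edge
  have key : ∀ e e' : Sym2 V, e ∈ H.edgeSet → e' ∈ H.edgeSet → x ∈ e → x ∉ e' →
      EdgeSees H e e' → nc e ≠ nc e' := by
    intro e e' he he' hxe hxe' hsee
    obtain ⟨c, hadj, rfl⟩ := edge_eq_of_mem he hxe
    have he'G : e' ∈ (DelV H x).edgeSet := delv_edge_mem he' hxe'
    have hold : nc e' = fc e' := hval_old e' hxe'
    have hmemF : ∀ u, EdgeSees H s(x, u) e' → fc e' ∈ (SeenF H x u).image fc :=
      fun u hs => Finset.mem_image_of_mem fc (mem_SeenF.2 ⟨he'G, hs⟩)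
    have hcmem : c ∈ ({y, z, w} : Finset V) := by
      rw [← hnx, mem_neighborFinset]; exact hadj
    simp only [Finset.mem_insert, Finset.mem_singleton] at hcmem
    rcases hcmem with rfl | rfl | rfl
    · rw [ncy, hold]
      exact fun h => hcy (by rw [h]; exact hmemF c hsee)
    · rw [ncz, hold]
      exact fun h => hcz (by rw [h]; exact hmemF c hsee)
    · rw [ncw, hold]
      exact fun h => hcw (by rw [h]; exact hmemF c hsee)
  refine ⟨fun e => nc e.val, ?_⟩
  intro e e' hsee
  show nc e.val ≠ nc e'.val
  by_cases hx1 : x ∈ e.val <;> by_cases hx2 : x ∈ e'.val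
  · -- both new
    have hnee := hsee.1
    obtain ⟨c, hc, hce⟩ := edge_eq_of_mem e.prop hx1
    obtain ⟨c', hc', hce'⟩ := edge_eq_of_mem e'.prop hx2
    have hcm : c ∈ ({y, z, w} : Finset V) := by
      rw [← hnx, mem_neighborFinset]; exact hc
    have hcm' : c' ∈ ({y, z, w} : Finset V) := by
      rw [← hnx, mem_neighborFinset]; exact hc'
    rw [hce, hce'] at hnee ⊢
    simp only [Finset.mem_insert, Finset.mem_singleton] at hcm hcm'
    rcases hcm with rfl | rfl | rfl <;> rcases hcm' with rfl | rfl | rfl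
    · exact absurd rfl hnee
    · rw [ncy, ncz]; exact hcyz
    · rw [ncy, ncw]; exact hcyw
    · rw [ncz, ncy]; exact hcyz.symm
    · exact absurd rfl hnee
    · rw [ncz, ncw]; exact fun h => hcwz h.symm
    · rw [ncw, ncy]; exact hcyw.symm
    · rw [ncw, ncz]; exact hcwz
    · exact absurd rfl hnee
  · exact key e.val e'.val e.prop e'.prop hx1 hx2 hsee
  · exact fun h => key e'.val e.val e'.prop e.prop hx2 hx1 (edgeSees_symm hsee) h.symm
  · -- both old
    have h1 : e.val ∈ (DelV H x).edgeSet := delv_edge_mem e.prop hx1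
    have h2 : e'.val ∈ (DelV H x).edgeSet := delv_edge_mem e'.prop hx2
    rw [hval_old _ hx1, hval_old _ hx2, hfc]
    simp only [dif_pos h1, dif_pos h2]
    apply hf ⟨e.val, h1⟩ ⟨e'.val, h2⟩
    obtain ⟨hne, a, ha, b, hb, hab⟩ := hsee
    refine ⟨hne, a, ha, b, hb, ?_⟩
    rcases hab with rfl | hadj
    · exact Or.inl rfl
    · exact Or.inr ⟨hadj, fun h => hx1 (h ▸ ha), fun h => hx2 (h ▸ hb)⟩
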